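/- The expected number of iterations for SEMO on LOTZ to obtain a first Pareto-optimal search point in the population is O(n²). If, after the Pareto front is reached, every parent selection selects a good individual with probability at least p_good whenever the population does not cover the whole Pareto front, then the expected number of iterations until the population covers the whole Pareto front is at most O(n²/p_good). -/

import Mathlib

noncomputable section
open scoped ENNReal
attribute [local instance] Classical.propDecidable

namespace EMO


/-- A bit string of length `n`. -/
abbrev BitString (n : ℕ) := Fin n → Bool

/-- Number of one-bits. -/
def onesCount {n : ℕ} (x : BitString n) : ℕ :=
  (Finset.univ.filter fun i => x i = true).card

def allOnes (n : ℕ) : BitString n := fun _ => true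
def allZeros (n : ℕ) : BitString n := fun _ => false

/-- The bi-objective function OneMinMax. -/
def OneMinMax {n : ℕ} (x : BitString n) : ℤ × ℤ :=
  ((onesCount x : ℤ), (n : ℤ) - (onesCount x : ℤ))

/-- Number of leading ones. -/
def leadingOnes {n : ℕ} (x : BitString n) : ℕ :=
  (Finset.univ.filter fun i : Fin n => ∀ j : Fin n, j ≤ i → x j = true).card

/-- Number of trailing zeros. -/
def trailingZeros {n : ℕ} (x : BitString n) : ℕ :=
  (Finset.univ.filter fun i : Fin n => ∀ j : Fin n, i ≤ j → x j = false).card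

/-- The bi-objective function LOTZ. -/
def LOTZ {n : ℕ} (x : BitString n) : ℤ × ℤ :=
  ((leadingOnes x : ℤ), (trailingZeros x : ℤ))

/-- `y` dominates `x` (maximisation). -/
def dominates {n : ℕ} (f : BitString n → ℤ × ℤ) (y x : BitString n) : Prop :=
  (f x).1 ≤ (f y).1 ∧ (f x).2 ≤ (f y).2 ∧ f x ≠ f y

/-- `y` weakly dominates `x` (maximisation). -/
def weaklyDominates {n : ℕ} (f : BitString n → ℤ × ℤ) (y x : BitString n) : Prop :=
  (f x).1 ≤ (f y).1 ∧ (f x).2 ≤ (f y).2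

/-- Pareto optimality. -/
def paretoOptimal {n : ℕ} (f : BitString n → ℤ × ℤ) (x : BitString n) : Prop :=
  ¬ ∃ y : BitString n, dominates f y x

/-- A population of mutually non-dominated points. -/
def mutuallyNonDominated {n : ℕ} (f : BitString n → ℤ × ℤ)
    (P : Finset (BitString n)) : Prop :=
  ∀ x ∈ P, ∀ y ∈ P, ¬ dominates f y x

/-- Flip bit `i` of `x`. -/
def flipBit {n : ℕ} (x : BitString n) (i : Fin n) : BitString n :=
  Function.update x i (!x i)

/-- `y` is a Hamming neighbour of `x`. -/
def hammingNeighbour {n : ℕ} (x y : BitString n) : Prop :=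
  ∃ i : Fin n, y = flipBit x i

/-- `x` is good relative to population `P`: it is Pareto optimal and has a Pareto-optimal
Hamming neighbour whose objective vector is not attained by any member of `P`. -/
def isGood {n : ℕ} (f : BitString n → ℤ × ℤ) (P : Finset (BitString n))
    (x : BitString n) : Prop :=
  paretoOptimal f x ∧
    ∃ y : BitString n, hammingNeighbour x y ∧ paretoOptimal f y ∧ ∀ z ∈ P, f z ≠ f y

/-- `x` is bad relative to population `P`. -/
def isBad {n : ℕ} (f : BitString n → ℤ × ℤ) (P : Finset (BitString n))
    (x : BitString n) : Prop :=
  paretoOptimal f x ∧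
    ¬ ∃ y : BitString n, hammingNeighbour x y ∧ paretoOptimal f y ∧ ∀ z ∈ P, f z ≠ f y

/-- `P` covers the whole Pareto front of `f`. -/
def coversFront {n : ℕ} (f : BitString n → ℤ × ℤ) (P : Finset (BitString n)) : Prop :=
  ∀ x : BitString n, paretoOptimal f x → ∃ z ∈ P, f z = f x

/-- The hypervolume contribution of `x` to `P` (for a population of mutually
non-dominated points, with reference point `r`). -/
def HVC {n : ℕ} (f : BitString n → ℤ × ℤ) (r : ℤ × ℤ) (x : BitString n)
    (P : Finset (BitString n)) : ℤ :=
  ((f x).1 - (((P.filter fun z => (f z).1 < (f x).1).image fun z => (f z).1).max.unbotD r.1)) *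
  ((f x).2 - (((P.filter fun z => (f z).2 < (f x).2).image fun z => (f z).2).max.unbotD r.2))

/-- Crowding distance of `x` in `P` with respect to a single objective `g`: infinite for the
boundary points, and otherwise the normalised difference between successor and predecessor. -/
def CDCobj {n : ℕ} (g : BitString n → ℤ) (x : BitString n)
    (P : Finset (BitString n)) : ℝ≥0∞ :=
  if (∀ z ∈ P, g x ≤ g z) ∨ (∀ z ∈ P, g z ≤ g x) then ⊤
  else
    (((((P.filter fun z => g x < g z).image g).min.untopD 0 -
        (((P.filter fun z => g z < g x).image g).max.unbotD 0)).toNat : ℝ≥0∞)) /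
      ((((P.image g).max.unbotD 0 - ((P.image g).min.untopD 0)).toNat : ℝ≥0∞))

/-- The crowding distance contribution of `x` to `P`. -/
def CDC {n : ℕ} (f : BitString n → ℤ × ℤ) (x : BitString n)
    (P : Finset (BitString n)) : ℝ≥0∞ :=
  CDCobj (fun z => (f z).1) x P + CDCobj (fun z => (f z).2) x P

/-- A diversity measure `c` is diversity-favouring on `S`. -/
def diversityFavouring {n : ℕ} {α : Type*} [Preorder α] (f : BitString n → ℤ × ℤ)
    (c : BitString n → Finset (BitString n) → α) (S : Set (BitString n)) : Prop :=
  ∀ P : Finset (BitString n), mutuallyNonDominated f P →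
    ∀ x ∈ P, ∀ y ∈ P, x ∈ S → y ∈ S → isBad f P x → isGood f P y → c x P < c y P

/-- The default bit string (used only to make selection kernels total). -/
def defaultBS (n : ℕ) : BitString n := fun _ => false

/-- Local mutation: flip a single uniformly random bit. -/
def localMutation {n : ℕ} (hn : 0 < n) (x : BitString n) : PMF (BitString n) :=
  haveI : Nonempty (Fin n) := ⟨⟨0, hn⟩⟩
  (PMF.uniformOfFintype (Fin n)).map (flipBit x)

/-- A Bernoulli coin with success probability `1/n` (for `n ≥ 1`). -/
def bitFlipCoin (n : ℕ) : PMF Bool :=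
  PMF.bernoulli (min ((n : ℝ≥0∞))⁻¹ 1).toNNReal
    ((ENNReal.toNNReal_mono ENNReal.one_ne_top (min_le_right _ _)).trans_eq ENNReal.toNNReal_one)

/-- Global (standard bit) mutation: flip each bit independently with probability `1/n`. -/
def globalMutationAux {n : ℕ} : List (Fin n) → BitString n → PMF (BitString n)
  | [], x => PMF.pure x
  | i :: is, x => (bitFlipCoin n).bind fun b =>
      globalMutationAux is (if b then flipBit x i else x)

def globalMutation {n : ℕ} (x : BitString n) : PMF (BitString n) :=
  globalMutationAux (List.finRange n) x

/-- Survival selection: if `s'` is not dominated by any member of `P`, add `s'` to `P` and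
remove all members weakly dominated by `s'`. -/
def updatePop {n : ℕ} (f : BitString n → ℤ × ℤ) (P : Finset (BitString n))
    (s' : BitString n) : Finset (BitString n) :=
  if ∃ z ∈ P, dominates f z s' then P
  else insert s' (P.filter fun z => ¬ weaklyDominates f s' z)

/-- One iteration of (G)SEMO with parent-selection kernel `select` and mutation `mutate`. -/
def step {n : ℕ} (f : BitString n → ℤ × ℤ)
    (select : Finset (BitString n) → PMF (BitString n))
    (mutate : BitString n → PMF (BitString n))
    (P : Finset (BitString n)) : PMF (Finset (BitString n)) :=
  (select P).bind fun s => (mutate s).map fun s' => updatePop f P s'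

/-- The L-dominant attribute `L(x) = LO(x) + TZ(x)`. -/
def Ldom {n : ℕ} (x : BitString n) : ℕ := leadingOnes x + trailingZeros x

/-- The subpopulation of points with maximum L-dominant attribute. -/
def maxLSub {n : ℕ} (P : Finset (BitString n)) : Finset (BitString n) :=
  P.filter fun x => ∀ z ∈ P, Ldom z ≤ Ldom x

/-- One iteration of the modified GSEMO: parent selection (and the diversity contribution)
is restricted to the subpopulation of points with maximum L-dominant attribute. -/
def stepMod {n : ℕ} (f : BitString n → ℤ × ℤ)
    (select : Finset (BitString n) → PMF (BitString n))
    (mutate : BitString n → PMF (BitString n))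
    (P : Finset (BitString n)) : PMF (Finset (BitString n)) :=
  (select (maxLSub P)).bind fun s => (mutate s).map fun s' => updatePop f P s'

/-- Initial population: a single uniformly random bit string. -/
def initDist (n : ℕ) : PMF (Finset (BitString n)) :=
  (PMF.uniformOfFintype (BitString n)).map fun x => {x}

/-- Distribution of the population after `t` iterations. -/
def stateDist {S : Type*} (init : PMF S) (st : S → PMF S) : ℕ → PMF S
  | 0 => init
  | t + 1 => (stateDist init st t).bind st

/-- Expected number of iterations until an (absorbing) goal predicate is reached,
expressed as `∑ₜ Pr[goal not yet reached at time t]`. -/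
def expectedRuntime {S : Type*} (init : PMF S) (st : S → PMF S) (goal : S → Prop) : ℝ≥0∞ :=
  ∑' t : ℕ, (stateDist init st t).toOuterMeasure {s | ¬ goal s}

/-- Uniform parent selection. -/
def uniformSelect {n : ℕ} (P : Finset (BitString n)) : PMF (BitString n) :=
  if h : P.Nonempty then PMF.uniformOfFinset P h else PMF.pure (defaultBS n)

/-- Highest Diversity Contribution (HDC) parent selection: select an individual with
maximum diversity contribution, ties broken uniformly at random. -/
def HDCSelect {n : ℕ} {α : Type*} [LinearOrder α]
    (c : BitString n → Finset (BitString n) → α)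
    (P : Finset (BitString n)) : PMF (BitString n) :=
  if h : P.Nonempty then
    PMF.uniformOfFinset (P.filter fun x => ∀ y ∈ P, c y P ≤ c x P)
      (by
        obtain ⟨b, hb, hmax⟩ := P.exists_max_image (fun x => c x P) h
        exact ⟨b, Finset.mem_filter.mpr ⟨hb, hmax⟩⟩)
  else PMF.pure (defaultBS n)

/-- Non-Minimum Uniform at Random (NMUAR) parent selection: select uniformly at random
among all individuals whose diversity contribution is not minimal (from the whole
population if all contributions are equal). -/
def NMUARSelect {n : ℕ} {α : Type*} [LinearOrder α]
    (c : BitString n → Finset (BitString n) → α)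
    (P : Finset (BitString n)) : PMF (BitString n) :=
  if h : P.Nonempty then
    if hQ : (P.filter fun x => ∃ y ∈ P, c y P < c x P).Nonempty then
      PMF.uniformOfFinset _ hQ
    else PMF.uniformOfFinset P h
  else PMF.pure (defaultBS n)

/-- Tournament selection with tournament size `μ = |P|`: draw `μ` individuals uniformly at
random with replacement from `P` and select one with the highest diversity contribution
among the drawn multiset (ties broken uniformly at random). -/
def tournamentSelect {n : ℕ} {α : Type*} [LinearOrder α]
    (c : BitString n → Finset (BitString n) → α)
    (P : Finset (BitString n)) : PMF (BitString n) :=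
  if h : P.Nonempty then
    haveI : Nonempty {x // x ∈ P} := h.to_subtype
    (PMF.uniformOfFintype (Fin P.card → {x // x ∈ P})).bind fun g =>
      PMF.uniformOfFinset
        ((Finset.univ.image fun i => ((g i : {x // x ∈ P}) : BitString n)).filter fun x =>
          ∀ y ∈ Finset.univ.image fun i => ((g i : {x // x ∈ P}) : BitString n), c y P ≤ c x P)
        (by
          have hne : (Finset.univ.image fun i => ((g i : {x // x ∈ P}) : BitString n)).Nonempty := by
            refine ⟨(g ⟨0, Finset.card_pos.mpr h⟩ : {x // x ∈ P}), ?_⟩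
            exact Finset.mem_image.mpr ⟨⟨0, Finset.card_pos.mpr h⟩, Finset.mem_univ _, rfl⟩
          obtain ⟨b, hb, hmax⟩ :=
            Finset.exists_max_image _ (fun x => c x P) hne
          exact ⟨b, Finset.mem_filter.mpr ⟨hb, hmax⟩⟩)
  else PMF.pure (defaultBS n)

/-- Exponential ranking scheme: probability of selecting the `i`-th ranked individual
(1-indexed) in a population of size `μ`. -/
def rExp (i μ : ℕ) : ℝ≥0∞ :=
  (2 : ℝ≥0∞)⁻¹ ^ i / ∑ j ∈ Finset.Icc 1 μ, (2 : ℝ≥0∞)⁻¹ ^ j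

/-- Power-law ranking scheme. -/
def rPow (i μ : ℕ) : ℝ≥0∞ :=
  ((i : ℝ≥0∞) ^ 2)⁻¹ / ∑ j ∈ Finset.Icc 1 μ, ((j : ℝ≥0∞) ^ 2)⁻¹

/-- Harmonic ranking scheme. -/
def rHarm (i μ : ℕ) : ℝ≥0∞ :=
  (i : ℝ≥0∞)⁻¹ / ∑ j ∈ Finset.Icc 1 μ, (j : ℝ≥0∞)⁻¹


/-- `select` implements a rank-based parent-selection scheme with rank probabilities
`r i μ` (1-indexed rank `i`, population size `μ`) with respect to the diversity
contribution `c`, for some non-increasing ordering of the population by `c`. -/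
def implementsRankScheme {n : ℕ} {α : Type*} [Preorder α]
    (c : BitString n → Finset (BitString n) → α) (r : ℕ → ℕ → ℝ≥0∞)
    (select : Finset (BitString n) → PMF (BitString n)) : Prop :=
  ∀ P : Finset (BitString n), P.Nonempty →
    ∃ l : List (BitString n), l.Nodup ∧ l.toFinset = P ∧
      l.Chain' (fun a b => c b P ≤ c a P) ∧
      (∀ i : Fin l.length, select P (l.get i) = r (i.val + 1) P.card) ∧
      (∀ x : BitString n, x ∉ P → select P x = 0)

/-- The Pareto-optimal point `1^i 0^(n-i)` of LOTZ. -/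
def opt (n i : ℕ) : BitString n := fun t => decide ((t : ℕ) < i)

/-- The whole Pareto set of LOTZ as a population. -/
def frontSet (n : ℕ) : Finset (BitString n) := (Finset.range (n + 1)).image (opt n)

/-- `P` has a gap at position `i`. -/
def hasGapAt {n : ℕ} (P : Finset (BitString n)) (i : ℕ) : Prop :=
  opt n i ∉ P ∧ (∃ j, j < i ∧ opt n j ∈ P) ∧ (∃ k, i < k ∧ k ≤ n ∧ opt n k ∈ P)

/-- `P` has a gap at some position `i` with `n/4 ≤ i ≤ 3n/4`. -/
def gapInRange (n : ℕ) (P : Finset (BitString n)) : Prop :=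
  ∃ i : ℕ, n ≤ 4 * i ∧ 4 * i ≤ 3 * n ∧ hasGapAt P i

/-- `P` contains both `0^n` and `1^n`. -/
def bothExtremes (n : ℕ) (P : Finset (BitString n)) : Prop :=
  allZeros n ∈ P ∧ allOnes n ∈ P

/-- The chain stopped (frozen) as soon as `cond` holds. -/
def stopWhen {S : Type*} (cond : S → Prop) (st : S → PMF S) (s : S) : PMF S :=
  if cond s then PMF.pure s else st s


namespace Aux
variable {n : ℕ}

lemma filter_lt_card (n a : ℕ) (ha : a ≤ n) :
    (Finset.univ.filter fun i : Fin n => (i : ℕ) < a).card = a := by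
  have : (Finset.univ.filter fun i : Fin n => (i : ℕ) < a) =
      (Finset.range a).attachFin (fun m hm => lt_of_lt_of_le (Finset.mem_range.mp hm) ha) := by
    ext i
    simp [Finset.mem_attachFin]
  rw [this, Finset.card_attachFin, Finset.card_range]

lemma filter_ge_card (n b : ℕ) (hb : b ≤ n) :
    (Finset.univ.filter fun i : Fin n => n - b ≤ (i : ℕ)).card = b := by
  have h := Finset.card_filter_add_card_filter_not (s := (Finset.univ : Finset (Fin n)))
    (fun i : Fin n => (i : ℕ) < n - b)
  have h1 : (Finset.univ.filter fun i : Fin n => (i : ℕ) < n - b).card = n - b :=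
    filter_lt_card n (n - b) (Nat.sub_le n b)
  have h2 : (Finset.univ.filter fun i : Fin n => ¬ (i : ℕ) < n - b) =
      (Finset.univ.filter fun i : Fin n => n - b ≤ (i : ℕ)) := by
    apply Finset.filter_congr; intro i _; simp [not_lt]
  rw [h1, h2, Finset.card_univ, Fintype.card_fin] at h
  omega

open EMO

lemma leadingOnes_le_n (x : BitString n) : leadingOnes x ≤ n := by
  have := Finset.card_filter_le (Finset.univ : Finset (Fin n))
    (fun i : Fin n => ∀ j : Fin n, j ≤ i → x j = true)
  simpa [leadingOnes] using this

lemma trailingZeros_le_n (x : BitString n) : trailingZeros x ≤ n := by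
  have := Finset.card_filter_le (Finset.univ : Finset (Fin n))
    (fun i : Fin n => ∀ j : Fin n, i ≤ j → x j = false)
  simpa [trailingZeros] using this

lemma le_leadingOnes {x : BitString n} {a : ℕ} (ha : a ≤ n)
    (h : ∀ j : Fin n, (j : ℕ) < a → x j = true) : a ≤ leadingOnes x := by
  rw [leadingOnes, ← filter_lt_card n a ha]
  apply Finset.card_le_card
  intro i hi
  simp only [Finset.mem_filter, Finset.mem_univ, true_and] at hi ⊢
  intro j hj
  exact h j (lt_of_le_of_lt (Fin.le_def.mp hj) hi)

lemma leadingOnes_le {x : BitString n} {a : ℕ} (ha : a < n)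
    (h : x ⟨a, ha⟩ = false) : leadingOnes x ≤ a := by
  rw [leadingOnes, ← filter_lt_card n a (le_of_lt ha)]
  apply Finset.card_le_card
  intro i hi
  simp only [Finset.mem_filter, Finset.mem_univ, true_and] at hi ⊢
  by_contra hlt
  push_neg at hlt
  have := hi ⟨a, ha⟩ (by simpa [Fin.le_def] using hlt)
  rw [h] at this; exact Bool.false_ne_true this

lemma le_trailingZeros {x : BitString n} {b : ℕ} (hb : b ≤ n)
    (h : ∀ j : Fin n, n - b ≤ (j : ℕ) → x j = false) : b ≤ trailingZeros x := by
  rw [trailingZeros, ← filter_ge_card n b hb]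
  apply Finset.card_le_card
  intro i hi
  simp only [Finset.mem_filter, Finset.mem_univ, true_and] at hi ⊢
  intro j hj
  exact h j (le_trans hi (Fin.le_def.mp hj))

lemma trailingZeros_le {x : BitString n} {b : ℕ} (hb : b < n)
    (h : x ⟨n - b - 1, by omega⟩ = true) : trailingZeros x ≤ b := by
  rw [trailingZeros, ← filter_ge_card n b (le_of_lt hb)]
  apply Finset.card_le_card
  intro i hi
  simp only [Finset.mem_filter, Finset.mem_univ, true_and] at hi ⊢
  by_contra hlt
  push_neg at hlt
  have := hi ⟨n - b - 1, by omega⟩ (by simp [Fin.le_def]; omega)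
  rw [h] at this; exact Bool.false_ne_true this.symm

lemma true_of_lt_leadingOnes {x : BitString n} {j : Fin n}
    (hj : (j : ℕ) < leadingOnes x) : x j = true := by
  by_contra hf
  have hx : x j = false := by simpa using hf
  have : leadingOnes x ≤ (j : ℕ) := leadingOnes_le j.isLt (by simpa using hx)
  omega

lemma false_of_leadingOnes_lt {x : BitString n} (h : leadingOnes x < n) :
    x ⟨leadingOnes x, h⟩ = false := by
  by_contra hf
  have hx : x ⟨leadingOnes x, h⟩ = true := by simpa using hf
  have : leadingOnes x + 1 ≤ leadingOnes x := by
    apply le_leadingOnes (by omega)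
    intro j hj
    rcases Nat.lt_succ_iff_lt_or_eq.mp hj with h1 | h2
    · exact true_of_lt_leadingOnes h1
    · have : j = ⟨leadingOnes x, h⟩ := Fin.ext h2
      rw [this]; exact hx
  omega

lemma false_of_ge_trailingZeros {x : BitString n} {j : Fin n}
    (hj : n - trailingZeros x ≤ (j : ℕ)) : x j = false := by
  by_contra hf
  have hx : x j = true := by simpa using hf
  have hjn : (j : ℕ) < n := j.isLt
  have h1 : trailingZeros x ≤ n - 1 - (j : ℕ) := by
    apply trailingZeros_le (by omega)
    have : (⟨n - (n - 1 - (j:ℕ)) - 1, by omega⟩ : Fin n) = j :=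
      Fin.ext (show n - (n - 1 - (j:ℕ)) - 1 = (j:ℕ) by omega)
    rw [this]; exact hx
  have := trailingZeros_le_n x
  omega

lemma true_of_trailingZeros_lt {x : BitString n} (h : trailingZeros x < n) :
    x ⟨n - trailingZeros x - 1, by omega⟩ = true := by
  by_contra hf
  have hx : x ⟨n - trailingZeros x - 1, by omega⟩ = false := by simpa using hf
  have : trailingZeros x + 1 ≤ trailingZeros x := by
    apply le_trailingZeros (by omega)
    intro j hj
    by_cases hc : n - trailingZeros x ≤ (j : ℕ)
    · exact false_of_ge_trailingZeros hc
    · have : j = (⟨n - trailingZeros x - 1, by omega⟩ : Fin n) :=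
        Fin.ext (show (j:ℕ) = n - trailingZeros x - 1 by omega)
      rw [this]; exact hx
  omega

lemma ldom_le_n (x : BitString n) : leadingOnes x + trailingZeros x ≤ n := by
  by_contra hc
  push_neg at hc
  have hb : 0 < trailingZeros x := by
    have := leadingOnes_le_n x; omega
  have htz := trailingZeros_le_n x
  have hjn : n - trailingZeros x < n := by omega
  have h1 : x ⟨n - trailingZeros x, hjn⟩ = true :=
    true_of_lt_leadingOnes (show n - trailingZeros x < leadingOnes x by omega)
  have h2 : x ⟨n - trailingZeros x, hjn⟩ = false :=
    false_of_ge_trailingZeros (show n - trailingZeros x ≤ n - trailingZeros x from le_rfl)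
  rw [h1] at h2; exact Bool.false_ne_true h2.symm

lemma leadingOnes_opt {i : ℕ} (hi : i ≤ n) : leadingOnes (opt n i) = i := by
  apply le_antisymm
  · rcases Nat.lt_or_ge i n with h | h
    · exact leadingOnes_le h (by simp [opt])
    · have := leadingOnes_le_n (opt n i); omega
  · exact le_leadingOnes hi (fun j hj => by simp [opt]; omega)

lemma trailingZeros_opt {i : ℕ} (hi : i ≤ n) : trailingZeros (opt n i) = n - i := by
  apply le_antisymm
  · rcases Nat.lt_or_ge (n - i) n with h | h
    · apply trailingZeros_le h
      simp [opt]; omega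
    · have := trailingZeros_le_n (opt n i); omega
  · apply le_trailingZeros (by omega)
    intro j hj
    simp [opt]; omega

lemma eq_opt_of_ldom {x : BitString n} (h : leadingOnes x + trailingZeros x = n) :
    x = opt n (leadingOnes x) := by
  funext j
  by_cases hj : (j : ℕ) < leadingOnes x
  · rw [true_of_lt_leadingOnes hj]; simp [opt, hj]
  · rw [false_of_ge_trailingZeros (x := x) (j := j) (by omega)]
    simp [opt]; omega

lemma lotz_fst (x : BitString n) : (LOTZ x).1 = (leadingOnes x : ℤ) := rfl
lemma lotz_snd (x : BitString n) : (LOTZ x).2 = (trailingZeros x : ℤ) := rfl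

lemma flipBit_apply_self (x : BitString n) (i : Fin n) : flipBit x i i = !x i := by
  simp [flipBit]

lemma flipBit_apply_ne (x : BitString n) {i j : Fin n} (h : (j : ℕ) ≠ (i : ℕ)) :
    flipBit x i j = x j := by
  have : j ≠ i := fun he => h (congrArg Fin.val he)
  simp [flipBit, Function.update, this]

end Aux
namespace Aux
open EMO
variable {n : ℕ}

lemma wd_iff {x y : BitString n} : weaklyDominates LOTZ y x ↔
    leadingOnes x ≤ leadingOnes y ∧ trailingZeros x ≤ trailingZeros y := by
  unfold weaklyDominates
  rw [lotz_fst, lotz_fst, lotz_snd, lotz_snd]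
  constructor
  · rintro ⟨h1, h2⟩; exact ⟨by exact_mod_cast h1, by exact_mod_cast h2⟩
  · rintro ⟨h1, h2⟩; exact ⟨by exact_mod_cast h1, by exact_mod_cast h2⟩

lemma dom_iff {x y : BitString n} : dominates LOTZ y x ↔
    leadingOnes x ≤ leadingOnes y ∧ trailingZeros x ≤ trailingZeros y ∧
      ¬ (leadingOnes x = leadingOnes y ∧ trailingZeros x = trailingZeros y) := by
  unfold dominates
  rw [lotz_fst, lotz_fst, lotz_snd, lotz_snd]
  constructor
  · rintro ⟨h1, h2, h3⟩
    refine ⟨by exact_mod_cast h1, by exact_mod_cast h2, fun ⟨e1, e2⟩ => h3 ?_⟩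
    unfold LOTZ; rw [e1, e2]
  · rintro ⟨h1, h2, h3⟩
    refine ⟨by exact_mod_cast h1, by exact_mod_cast h2, fun he => h3 ?_⟩
    unfold LOTZ at he
    have e1 : (leadingOnes x : ℤ) = leadingOnes y := congrArg Prod.fst he
    have e2 : (trailingZeros x : ℤ) = trailingZeros y := congrArg Prod.snd he
    exact ⟨by exact_mod_cast e1, by exact_mod_cast e2⟩

lemma dominates_flip {x : BitString n} (h : leadingOnes x + trailingZeros x < n) :
    ∃ i : Fin n, dominates LOTZ (flipBit x i) x ∧
      leadingOnes x + trailingZeros x < leadingOnes (flipBit x i) + trailingZeros (flipBit x i) := by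
  have ha : leadingOnes x < n := by have := trailingZeros_le_n x; omega
  refine ⟨⟨leadingOnes x, ha⟩, ?_⟩
  set y := flipBit x ⟨leadingOnes x, ha⟩ with hy
  have hLO : leadingOnes x + 1 ≤ leadingOnes y := by
    apply le_leadingOnes (by omega)
    intro j hj
    by_cases hc : (j : ℕ) < leadingOnes x
    · rw [hy, flipBit_apply_ne x (show (j : ℕ) ≠ leadingOnes x by omega)]
      exact true_of_lt_leadingOnes hc
    · have hje : j = (⟨leadingOnes x, ha⟩ : Fin n) :=
        Fin.ext (show (j : ℕ) = leadingOnes x by omega)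
      rw [hje, hy, flipBit_apply_self, false_of_leadingOnes_lt ha]
      rfl
  have hTZ : trailingZeros x ≤ trailingZeros y := by
    apply le_trailingZeros (trailingZeros_le_n x)
    intro j hj
    rw [hy, flipBit_apply_ne x (show (j : ℕ) ≠ leadingOnes x by omega)]
    exact false_of_ge_trailingZeros hj
  refine ⟨dom_iff.mpr ⟨by omega, hTZ, by omega⟩, by omega⟩

lemma pareto_iff {x : BitString n} :
    paretoOptimal LOTZ x ↔ leadingOnes x + trailingZeros x = n := by
  constructor
  · intro hp
    by_contra hc
    have hlt : leadingOnes x + trailingZeros x < n := by have := ldom_le_n x; omega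
    obtain ⟨i, hd, _⟩ := dominates_flip hlt
    exact hp ⟨_, hd⟩
  · rintro h ⟨y, hy⟩
    rw [dom_iff] at hy
    have := ldom_le_n y
    omega

lemma pareto_opt {i : ℕ} (hi : i ≤ n) : paretoOptimal LOTZ (opt n i) := by
  rw [pareto_iff, leadingOnes_opt hi, trailingZeros_opt hi]; omega

lemma eq_opt_of_f_eq {z : BitString n} {i : ℕ} (hi : i ≤ n)
    (h : LOTZ z = LOTZ (opt n i)) : z = opt n i := by
  have e1 : leadingOnes z = i := by
    have := congrArg Prod.fst h
    rw [lotz_fst, lotz_fst, leadingOnes_opt hi] at this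
    exact_mod_cast this
  have e2 : trailingZeros z = n - i := by
    have := congrArg Prod.snd h
    rw [lotz_snd, lotz_snd, trailingZeros_opt hi] at this
    exact_mod_cast this
  have := eq_opt_of_ldom (x := z) (by omega)
  rwa [e1] at this

lemma pareto_eq_opt {x : BitString n} (h : paretoOptimal LOTZ x) :
    x = opt n (leadingOnes x) := eq_opt_of_ldom (pareto_iff.mp h)

/-- maximum L-dominant value in the population -/
def mld (P : Finset (BitString n)) : ℕ := P.sup (fun z => leadingOnes z + trailingZeros z)

/-- number of covered front points -/
def cov (n : ℕ) (P : Finset (BitString n)) : ℕ :=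
  ((Finset.range (n + 1)).filter fun i => opt n i ∈ P).card

lemma cov_le (P : Finset (BitString n)) : cov n P ≤ n + 1 := by
  have := Finset.card_filter_le (Finset.range (n + 1)) (fun i => opt n i ∈ P)
  simpa [cov] using this

lemma mld_updatePop (P : Finset (BitString n)) (s' : BitString n) :
    mld P ≤ mld (updatePop LOTZ P s') := by
  unfold updatePop mld
  split
  · exact le_rfl
  · apply Finset.sup_le
    intro z hz
    by_cases hw : weaklyDominates LOTZ s' z
    · rw [wd_iff] at hw
      refine le_trans (show leadingOnes z + trailingZeros z ≤
          leadingOnes s' + trailingZeros s' by omega) ?_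
      exact Finset.le_sup (f := fun z => leadingOnes z + trailingZeros z)
        (Finset.mem_insert_self s' _)
    · exact Finset.le_sup (f := fun z => leadingOnes z + trailingZeros z)
        (Finset.mem_insert_of_mem (Finset.mem_filter.mpr ⟨hz, hw⟩))

lemma opt_mem_updatePop {P : Finset (BitString n)} {i : ℕ} (hi : i ≤ n) (s' : BitString n)
    (h : opt n i ∈ P) : opt n i ∈ updatePop LOTZ P s' := by
  unfold updatePop
  split
  · exact h
  · by_cases hw : weaklyDominates LOTZ s' (opt n i)
    · have : s' = opt n i := by
        rw [wd_iff, leadingOnes_opt hi, trailingZeros_opt hi] at hw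
        have hle := ldom_le_n s'
        have e1 : leadingOnes s' = i := by omega
        have e2 : trailingZeros s' = n - i := by omega
        have := eq_opt_of_ldom (x := s') (by omega)
        rwa [e1] at this
      rw [← this]; exact Finset.mem_insert_self _ _
    · exact Finset.mem_insert_of_mem (Finset.mem_filter.mpr ⟨h, hw⟩)

lemma cov_updatePop (P : Finset (BitString n)) (s' : BitString n) :
    cov n P ≤ cov n (updatePop LOTZ P s') := by
  apply Finset.card_le_card
  intro i hi
  rw [Finset.mem_filter, Finset.mem_range] at hi ⊢
  exact ⟨hi.1, opt_mem_updatePop (by omega) s' hi.2⟩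

lemma mnd_updatePop {P : Finset (BitString n)} (h : mutuallyNonDominated LOTZ P)
    (s' : BitString n) : mutuallyNonDominated LOTZ (updatePop LOTZ P s') := by
  unfold updatePop
  split
  · exact h
  · rename_i hnd
    intro x hx y hy
    rcases Finset.mem_insert.mp hx with rfl | hx' <;>
      rcases Finset.mem_insert.mp hy with h' | hy'
    · subst h'
      rintro ⟨_, _, hne⟩; exact hne rfl
    · have hyP := (Finset.mem_filter.mp hy').1
      intro hd
      exact hnd ⟨y, hyP, hd⟩
    · subst h'
      have := (Finset.mem_filter.mp hx').2
      intro hd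
      exact this ⟨hd.1, hd.2.1⟩
    · exact h x (Finset.mem_filter.mp hx').1 y (Finset.mem_filter.mp hy').1

lemma nonempty_updatePop {P : Finset (BitString n)} (h : P.Nonempty) (s' : BitString n) :
    (updatePop LOTZ P s').Nonempty := by
  unfold updatePop
  split
  · exact h
  · exact Finset.insert_nonempty _ _

lemma coversFront_iff {P : Finset (BitString n)} :
    coversFront LOTZ P ↔ cov n P = n + 1 := by
  constructor
  · intro h
    have : ((Finset.range (n + 1)).filter fun i => opt n i ∈ P) = Finset.range (n + 1) := by
      apply Finset.filter_true_of_mem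
      intro i hi
      rw [Finset.mem_range] at hi
      obtain ⟨z, hz, hfz⟩ := h (opt n i) (pareto_opt (by omega))
      have := eq_opt_of_f_eq (by omega) hfz
      rwa [← this]
    rw [cov, this, Finset.card_range]
  · intro h x hx
    have hall : ∀ i ≤ n, opt n i ∈ P := by
      intro i hi
      have hsub : ((Finset.range (n + 1)).filter fun i => opt n i ∈ P) = Finset.range (n + 1) :=
        Finset.eq_of_subset_of_card_le (Finset.filter_subset _ _)
          (by rw [Finset.card_range]; exact le_of_eq h.symm)
      have : i ∈ (Finset.range (n + 1)).filter fun i => opt n i ∈ P := by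
        rw [hsub, Finset.mem_range]; omega
      exact (Finset.mem_filter.mp this).2
    have hx' := pareto_eq_opt hx
    have hlo : leadingOnes x ≤ n := leadingOnes_le_n x
    exact ⟨opt n (leadingOnes x), hall _ hlo, by rw [← hx']⟩

end Aux
namespace Aux
open EMO
variable {n : ℕ}

/-- one-bit comparability for non-Pareto parents -/
lemma weak_comp {x : BitString n} (h : leadingOnes x + trailingZeros x < n) (i : Fin n) :
    weaklyDominates LOTZ x (flipBit x i) ∨ weaklyDominates LOTZ (flipBit x i) x := by
  set a := leadingOnes x with hadef
  set b := trailingZeros x with hbdef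
  have ha : a < n := by have := trailingZeros_le_n x; omega
  have hb : b < n := by have := leadingOnes_le_n x; omega
  set y := flipBit x i with hy
  rcases Nat.lt_or_ge (i : ℕ) a with hia | hia
  · -- i < a : y weakly dominated by x
    left
    rw [wd_iff]
    constructor
    · have hyi : y i = false := by
        rw [hy, flipBit_apply_self, true_of_lt_leadingOnes hia]; rfl
      exact le_trans (leadingOnes_le i.isLt (by rw [Fin.eta]; exact hyi)) (by omega)
    · apply trailingZeros_le hb
      rw [hy, flipBit_apply_ne x (show n - b - 1 ≠ (i : ℕ) by omega)]
      exact true_of_trailingZeros_lt hb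
  · rcases Nat.lt_or_ge (i : ℕ) (n - b) with hib | hib
    · -- a ≤ i < n - b : y weakly dominates x
      right
      rw [wd_iff]
      constructor
      · apply le_leadingOnes (by omega)
        intro j hj
        rw [hy, flipBit_apply_ne x (show (j : ℕ) ≠ (i : ℕ) by omega)]
        exact true_of_lt_leadingOnes hj
      · apply le_trailingZeros (by omega)
        intro j hj
        rw [hy, flipBit_apply_ne x (show (j : ℕ) ≠ (i : ℕ) by omega)]
        exact false_of_ge_trailingZeros hj
    · -- n - b ≤ i : y weakly dominated by x
      left
      rw [wd_iff]
      constructor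
      · refine le_trans (leadingOnes_le (show a < n from ha) ?_) le_rfl
        rw [hy, flipBit_apply_ne x (show (a : ℕ) ≠ (i : ℕ) by omega)]
        exact false_of_leadingOnes_lt ha
      · have hyi : y i = true := by
          rw [hy, flipBit_apply_self,
            false_of_ge_trailingZeros (x := x) (j := i) (show n - trailingZeros x ≤ (i:ℕ) by omega)]
          rfl
        have : trailingZeros y ≤ n - 1 - (i : ℕ) := by
          apply trailingZeros_le (by have := i.isLt; omega)
          have hje : (⟨n - (n - 1 - (i : ℕ)) - 1, by have := i.isLt; omega⟩ : Fin n) = i :=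
            Fin.ext (show n - (n - 1 - (i : ℕ)) - 1 = (i : ℕ) by have := i.isLt; omega)
          rw [hje]; exact hyi
        omega

lemma updatePop_singleton {x : BitString n} (hx : ¬ paretoOptimal LOTZ x) (i : Fin n) :
    updatePop LOTZ {x} (flipBit x i) = {x} ∨
      updatePop LOTZ {x} (flipBit x i) = {flipBit x i} := by
  have hld : leadingOnes x + trailingZeros x < n := by
    have := ldom_le_n x
    rcases Nat.lt_or_ge (leadingOnes x + trailingZeros x) n with h | h
    · exact h
    · exact absurd (pareto_iff.mpr (by omega)) hx
  set s' := flipBit x i with hs'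
  by_cases hd : dominates LOTZ x s'
  · left
    unfold updatePop
    rw [if_pos ⟨x, Finset.mem_singleton_self x, hd⟩]
  · right
    have hws : weaklyDominates LOTZ s' x := by
      rcases weak_comp hld i with hw | hw
      · -- x weakly dominates s' but does not dominate: equal objective values
        rw [wd_iff] at hw
        rw [dom_iff] at hd
        push_neg at hd
        rw [wd_iff]
        have := hd hw.1 hw.2
        omega
      · exact hw
    unfold updatePop
    rw [if_neg (by rintro ⟨z, hz, hdz⟩; rw [Finset.mem_singleton] at hz; subst hz; exact hd hdz)]
    rw [Finset.filter_singleton, if_neg (by simpa using hws)]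
    rfl

lemma mld_singleton (x : BitString n) : mld ({x} : Finset (BitString n)) =
    leadingOnes x + trailingZeros x := Finset.sup_singleton

/-- improvement step from a non-Pareto singleton -/
lemma improve_singleton {x : BitString n} (hx : ¬ paretoOptimal LOTZ x) :
    ∃ i : Fin n, updatePop LOTZ {x} (flipBit x i) = {flipBit x i} ∧
      leadingOnes x + trailingZeros x <
        leadingOnes (flipBit x i) + trailingZeros (flipBit x i) := by
  have hld : leadingOnes x + trailingZeros x < n := by
    have := ldom_le_n x
    rcases Nat.lt_or_ge (leadingOnes x + trailingZeros x) n with h | h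
    · exact h
    · exact absurd (pareto_iff.mpr (by omega)) hx
  obtain ⟨i, hdom, hinc⟩ := dominates_flip hld
  refine ⟨i, ?_, hinc⟩
  set s' := flipBit x i with hs'
  have hnd : ¬ dominates LOTZ x s' := by
    rw [dom_iff] at hdom ⊢
    omega
  unfold updatePop
  rw [if_neg (by rintro ⟨z, hz, hdz⟩; rw [Finset.mem_singleton] at hz; subst hz; exact hnd hdz)]
  rw [Finset.filter_singleton, if_neg (by simpa using ⟨hdom.1, hdom.2.1⟩)]
  rfl

/-- the invariant maintained by the SEMO process -/
def SInv {n : ℕ} (P : Finset (BitString n)) : Prop :=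
  P.Nonempty ∧ mutuallyNonDominated LOTZ P ∧
    ((∃ x ∈ P, paretoOptimal LOTZ x) ∨ ∃ x, P = {x})

lemma inv_updatePop_of_pareto {P : Finset (BitString n)} {x : BitString n}
    (hx : x ∈ P) (hp : paretoOptimal LOTZ x) (s' : BitString n) :
    ∃ y ∈ updatePop LOTZ P s', paretoOptimal LOTZ y := by
  have hxe := pareto_eq_opt hp
  have hlo := leadingOnes_le_n x
  refine ⟨opt n (leadingOnes x), opt_mem_updatePop hlo s' (by rwa [← hxe]), pareto_opt hlo⟩

lemma inv_step {P : Finset (BitString n)} (hI : SInv P) {s : BitString n} (hs : s ∈ P)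
    (i : Fin n) : SInv (updatePop LOTZ P (flipBit s i)) := by
  obtain ⟨hne, hmnd, hdisj⟩ := hI
  refine ⟨nonempty_updatePop hne _, mnd_updatePop hmnd _, ?_⟩
  rcases hdisj with ⟨x, hx, hp⟩ | ⟨x, rfl⟩
  · exact Or.inl (inv_updatePop_of_pareto hx hp _)
  · rw [Finset.mem_singleton] at hs
    subst hs
    by_cases hp : paretoOptimal LOTZ s
    · exact Or.inl (inv_updatePop_of_pareto (Finset.mem_singleton_self s) hp _)
    · rcases updatePop_singleton hp i with h | h
      · exact Or.inr ⟨s, h⟩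
      · exact Or.inr ⟨flipBit s i, h⟩

end Aux
namespace Aux
open EMO
open scoped ENNReal

/-- expectation bound from pointwise support bound -/
lemma pmf_exp_le {α : Type*} (q : PMF α) (g : α → ℕ) (M : ℕ)
    (h : ∀ a ∈ q.support, g a ≤ M) : (∑' a, q a * (g a : ℝ≥0∞)) ≤ (M : ℝ≥0∞) := by
  calc (∑' a, q a * (g a : ℝ≥0∞)) ≤ ∑' a, q a * (M : ℝ≥0∞) := by
        apply ENNReal.tsum_le_tsum
        intro a
        by_cases ha : q a = 0
        · simp [ha]
        · exact mul_le_mul_right (by exact_mod_cast Nat.cast_le.mpr (h a ha)) _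
  _ = (M : ℝ≥0∞) := by rw [ENNReal.tsum_mul_right, q.tsum_coe, one_mul]

/-- expectation plus improvement probability bound -/
lemma pmf_exp_add_le {α : Type*} (q : PMF α) (g : α → ℕ) (G : ℕ) (s : ℝ≥0∞)
    (hmono : ∀ a ∈ q.support, g a ≤ G)
    (himp : s ≤ q.toOuterMeasure {a | g a + 1 ≤ G}) :
    (∑' a, q a * (g a : ℝ≥0∞)) + s ≤ (G : ℝ≥0∞) := by
  rw [PMF.toOuterMeasure_apply] at himp
  calc (∑' a, q a * (g a : ℝ≥0∞)) + s
      ≤ (∑' a, q a * (g a : ℝ≥0∞)) + ∑' a, Set.indicator {a | g a + 1 ≤ G} (⇑q) a :=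
        add_le_add_right himp _
    _ = ∑' a, (q a * (g a : ℝ≥0∞) + Set.indicator {a | g a + 1 ≤ G} (⇑q) a) :=
        (ENNReal.tsum_add).symm
    _ ≤ ∑' a, q a * (G : ℝ≥0∞) := by
        apply ENNReal.tsum_le_tsum
        intro a
        by_cases ha : q a = 0
        · simp [ha, Set.indicator]
        · by_cases hA : a ∈ {a | g a + 1 ≤ G}
          · rw [Set.indicator_of_mem hA]
            have : (g a : ℝ≥0∞) + 1 ≤ (G : ℝ≥0∞) := by
              exact_mod_cast Nat.cast_le.mpr hA
            calc q a * (g a : ℝ≥0∞) + q a = q a * ((g a : ℝ≥0∞) + 1) := by ring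
              _ ≤ q a * (G : ℝ≥0∞) := mul_le_mul_right this _
          · rw [Set.indicator_of_notMem hA, add_zero]
            exact mul_le_mul_right (by exact_mod_cast Nat.cast_le.mpr (hmono a ha)) _
    _ = (G : ℝ≥0∞) := by rw [ENNReal.tsum_mul_right, q.tsum_coe, one_mul]

/-- master drift theorem: `s * E[T] ≤ M` -/
lemma runtime_bound {S : Type*} (init : PMF S) (st : S → PMF S) (goal : S → Prop)
    (I : S → Prop) (g : S → ℕ) (M : ℕ) (s : ℝ≥0∞)
    (hinit : ∀ x ∈ init.support, I x)
    (hinv : ∀ x, I x → ∀ y ∈ (st x).support, I y)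
    (hM : ∀ x, I x → g x ≤ M)
    (hmono : ∀ x, I x → ∀ y ∈ (st x).support, g y ≤ g x)
    (himp : ∀ x, I x → ¬ goal x → s ≤ (st x).toOuterMeasure {y | g y + 1 ≤ g x}) :
    s * expectedRuntime init st goal ≤ (M : ℝ≥0∞) := by
  set μ := stateDist init st with hμ
  have hsupp : ∀ t, ∀ x ∈ (μ t).support, I x := by
    intro t
    induction t with
    | zero => exact hinit
    | succ t ih =>
      intro x hx
      rw [show μ (t+1) = (μ t).bind st from rfl, PMF.support_bind] at hx
      simp only [Set.mem_iUnion] at hx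
      obtain ⟨a, ha, hxa⟩ := hx
      exact hinv a (ih a ha) x hxa
  set A : ℕ → ℝ≥0∞ := fun t => ∑' x, μ t x * (g x : ℝ≥0∞) with hA
  set B : ℕ → ℝ≥0∞ := fun t => (μ t).toOuterMeasure {x | ¬ goal x} with hB
  have key : ∀ t, A (t + 1) + s * B t ≤ A t := by
    intro t
    have hA1 : A (t + 1) = ∑' x, μ t x * ∑' y, st x y * (g y : ℝ≥0∞) := by
      rw [hA]
      simp only
      rw [show μ (t+1) = (μ t).bind st from rfl]
      simp only [PMF.bind_apply]
      calc ∑' x, (∑' a, μ t a * st a x) * (g x : ℝ≥0∞)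
          = ∑' x, ∑' a, μ t a * st a x * (g x : ℝ≥0∞) := by
            congr 1; funext x; rw [ENNReal.tsum_mul_right]
        _ = ∑' a, ∑' x, μ t a * st a x * (g x : ℝ≥0∞) := ENNReal.tsum_comm
        _ = ∑' a, μ t a * ∑' x, st a x * (g x : ℝ≥0∞) := by
            congr 1; funext a
            rw [← ENNReal.tsum_mul_left]
            congr 1; funext x; ring
    have hB1 : s * B t = ∑' x, μ t x * (if goal x then 0 else s) := by
      rw [hB]
      simp only
      rw [PMF.toOuterMeasure_apply, ← ENNReal.tsum_mul_left]
      congr 1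
      funext x
      by_cases hg : goal x
      · simp [Set.indicator, hg]
      · simp [Set.indicator, hg, mul_comm]
    rw [hA1, hB1, ← ENNReal.tsum_add]
    apply ENNReal.tsum_le_tsum
    intro x
    by_cases hx : μ t x = 0
    · simp [hx]
    · have hIx : I x := hsupp t x hx
      rw [← mul_add]
      apply mul_le_mul_right
      by_cases hg : goal x
      · rw [if_pos hg, add_zero]
        exact pmf_exp_le (st x) g (g x) (hmono x hIx)
      · rw [if_neg hg]
        exact pmf_exp_add_le (st x) g (g x) s (hmono x hIx) (himp x hIx hg)
  have hA0 : A 0 ≤ (M : ℝ≥0∞) := pmf_exp_le init g M (fun a ha => hM a (hinit a ha))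
  have hpartial : ∀ T, (∑ t ∈ Finset.range T, s * B t) + A T ≤ (M : ℝ≥0∞) := by
    intro T
    induction T with
    | zero => simpa using hA0
    | succ T ih =>
      rw [Finset.sum_range_succ]
      calc (∑ t ∈ Finset.range T, s * B t) + s * B T + A (T + 1)
          = (∑ t ∈ Finset.range T, s * B t) + (A (T + 1) + s * B T) := by ring
        _ ≤ (∑ t ∈ Finset.range T, s * B t) + A T := add_le_add_right (key T) _
        _ ≤ (M : ℝ≥0∞) := ih
  have : s * expectedRuntime init st goal = ∑' t, s * B t := by
    rw [expectedRuntime, ← ENNReal.tsum_mul_left]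
  rw [this, ENNReal.tsum_eq_iSup_nat]
  apply iSup_le
  intro T
  exact le_trans (le_add_right le_rfl : _ ≤ _ + A T) (hpartial T)

end Aux
namespace Aux
open EMO
open scoped ENNReal
variable {n : ℕ}

lemma support_step {hn : 0 < n} {f : BitString n → ℤ × ℤ}
    {select : Finset (BitString n) → PMF (BitString n)}
    {P Q : Finset (BitString n)}
    (hQ : Q ∈ (step f select (localMutation hn) P).support) :
    ∃ s ∈ (select P).support, ∃ i : Fin n, Q = updatePop f P (flipBit s i) := by
  rw [step, PMF.support_bind] at hQ
  simp only [Set.mem_iUnion] at hQ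
  obtain ⟨s, hs, hQ'⟩ := hQ
  rw [PMF.support_map] at hQ'
  obtain ⟨s', hs', rfl⟩ := hQ'
  rw [localMutation, PMF.support_map] at hs'
  obtain ⟨i, _, rfl⟩ := hs'
  exact ⟨s, hs, i, rfl⟩

lemma step_prob {hn : 0 < n} {f : BitString n → ℤ × ℤ}
    {select : Finset (BitString n) → PMF (BitString n)}
    {P : Finset (BitString n)} (G : Set (BitString n)) (A : Set (Finset (BitString n)))
    (p : ℝ≥0∞) (hG : p ≤ (select P).toOuterMeasure G)
    (hA : ∀ s ∈ G, ∃ i : Fin n, updatePop f P (flipBit s i) ∈ A) :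
    p * (n : ℝ≥0∞)⁻¹ ≤ (step f select (localMutation hn) P).toOuterMeasure A := by
  haveI : Nonempty (Fin n) := ⟨⟨0, hn⟩⟩
  rw [step, PMF.toOuterMeasure_bind_apply]
  have hpt : ∀ s ∈ G, (n : ℝ≥0∞)⁻¹ ≤
      ((localMutation hn s).map (fun s' => updatePop f P s')).toOuterMeasure A := by
    intro s hs
    obtain ⟨i, hi⟩ := hA s hs
    rw [PMF.toOuterMeasure_map_apply, localMutation, PMF.toOuterMeasure_map_apply,
      PMF.toOuterMeasure_apply]
    have hmem : i ∈ (flipBit s ⁻¹' ((fun s' => updatePop f P s') ⁻¹' A)) := hi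
    calc (n : ℝ≥0∞)⁻¹
        = Set.indicator (flipBit s ⁻¹' ((fun s' => updatePop f P s') ⁻¹' A))
            (⇑(PMF.uniformOfFintype (Fin n))) i := by
          rw [Set.indicator_of_mem hmem, PMF.uniformOfFintype_apply, Fintype.card_fin]
      _ ≤ _ := ENNReal.le_tsum i
  calc p * (n : ℝ≥0∞)⁻¹ ≤ (select P).toOuterMeasure G * (n : ℝ≥0∞)⁻¹ :=
        mul_le_mul_left hG _
    _ = ∑' s, Set.indicator G (⇑(select P)) s * (n : ℝ≥0∞)⁻¹ := by
        rw [PMF.toOuterMeasure_apply, ENNReal.tsum_mul_right]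
    _ ≤ ∑' s, select P s *
        ((localMutation hn s).map (fun s' => updatePop f P s')).toOuterMeasure A := by
        apply ENNReal.tsum_le_tsum
        intro s
        by_cases hs : s ∈ G
        · rw [Set.indicator_of_mem hs]
          exact mul_le_mul_right (hpt s hs) _
        · rw [Set.indicator_of_notMem hs, zero_mul]
          exact zero_le

lemma support_measure_one {α : Type*} (q : PMF α) : q.toOuterMeasure q.support = 1 := by
  rw [PMF.toOuterMeasure_apply]
  rw [← q.tsum_coe]
  congr 1
  funext a
  by_cases ha : a ∈ q.support
  · rw [Set.indicator_of_mem ha]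
  · rw [Set.indicator_of_notMem ha]
    exact (PMF.apply_eq_zero_iff q a |>.mpr ha).symm

end Aux
namespace Aux
open EMO
open scoped ENNReal
variable {n : ℕ}

lemma inv_singleton (x : BitString n) : SInv ({x} : Finset (BitString n)) := by
  refine ⟨Finset.singleton_nonempty x, ?_, Or.inr ⟨x, rfl⟩⟩
  intro a ha b hb
  rw [Finset.mem_singleton] at ha hb
  subst ha; subst hb
  intro hd
  rw [dom_iff] at hd
  omega

lemma mem_updatePop_self {P : Finset (BitString n)} {s' : BitString n}
    (h : ¬ ∃ z ∈ P, dominates LOTZ z s') : s' ∈ updatePop LOTZ P s' := by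
  unfold updatePop
  rw [if_neg h]
  exact Finset.mem_insert_self _ _

lemma not_pareto_of_singleton {x : BitString n}
    (hng : ¬ ∃ y ∈ ({x} : Finset (BitString n)), paretoOptimal LOTZ y) :
    ¬ paretoOptimal LOTZ x :=
  fun hp => hng ⟨x, Finset.mem_singleton_self x, hp⟩

end Aux

open Aux

/-- SEMO on LOTZ (any parent selection supported on the population)
reaches the Pareto front in expected time `O(n²)`; and if afterwards a good individual
is always selected with probability at least `p` while the front is not fully covered,
then the whole Pareto front is covered in expected time `O(n²/p)`. -/
theorem semo_lotz_pgood :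
    ∃ C : ℝ, 0 < C ∧ ∀ n : ℕ, ∀ hn : 0 < n,
      ∀ select : Finset (BitString n) → PMF (BitString n),
        (∀ P : Finset (BitString n), P.Nonempty →
          ∀ x ∈ (select P).support, x ∈ P) →
        (expectedRuntime (initDist n) (step LOTZ select (localMutation hn))
            (fun P => ∃ x ∈ P, paretoOptimal LOTZ x) ≤
          ENNReal.ofReal (C * (n : ℝ) ^ 2)) ∧
        ∀ p : ℝ≥0∞, 0 < p → p ≤ 1 →
          (∀ P : Finset (BitString n), P.Nonempty → mutuallyNonDominated LOTZ P →
            (∃ x ∈ P, paretoOptimal LOTZ x) → ¬ coversFront LOTZ P →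
            p ≤ (select P).toOuterMeasure {x | isGood LOTZ P x}) →
          expectedRuntime (initDist n) (step LOTZ select (localMutation hn))
              (coversFront LOTZ) ≤
            ENNReal.ofReal (C * (n : ℝ) ^ 2) / p := by
  refine ⟨3, by norm_num, ?_⟩
  intro n hn select hsel
  set st := step LOTZ select (localMutation hn) with hst
  have hnne : (n : ℝ≥0∞) ≠ 0 := by
    exact_mod_cast Nat.cast_ne_zero.mpr hn.ne'
  have hntop : (n : ℝ≥0∞) ≠ ⊤ := ENNReal.natCast_ne_top n
  -- initial states satisfy the invariant
  have hinit : ∀ Q ∈ (initDist n).support, SInv Q := by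
    intro Q hQ
    rw [initDist, PMF.support_map] at hQ
    obtain ⟨x, _, rfl⟩ := hQ
    exact inv_singleton x
  -- the invariant is preserved
  have hinv : ∀ P, SInv P → ∀ Q ∈ (st P).support, SInv Q := by
    intro P hI Q hQ
    obtain ⟨s, hs, i, rfl⟩ := support_step hQ
    exact inv_step hI (hsel P hI.1 s hs) i
  -- the cast bound
  have hofr : ENNReal.ofReal ((3:ℝ) * (n : ℝ) ^ 2) = ((3 * n ^ 2 : ℕ) : ℝ≥0∞) := by
    rw [show (3 * (n:ℝ)^2) = ((3 * n^2 : ℕ) : ℝ) by push_cast; ring, ENNReal.ofReal_natCast]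
  constructor
  · -- Claim 1: reach the Pareto front in expected time ≤ n²
    have hrb := runtime_bound (initDist n) st (fun P => ∃ x ∈ P, paretoOptimal LOTZ x)
      SInv (fun P => n - mld P) n ((n : ℝ≥0∞))⁻¹ hinit hinv
      (fun P _ => Nat.sub_le _ _)
      (by
        intro P _ Q hQ
        obtain ⟨s, _, i, rfl⟩ := support_step hQ
        have := mld_updatePop P (flipBit s i)
        show n - mld (updatePop LOTZ P (flipBit s i)) ≤ n - mld P
        omega)
      (by
        intro P hI hng
        rcases hI.2.2.resolve_left hng with ⟨x, rfl⟩
        have hx : ¬ paretoOptimal LOTZ x := not_pareto_of_singleton hng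
        obtain ⟨i, hup, hinc⟩ := improve_singleton hx
        have hmeas := support_measure_one (select {x})
        have := step_prob (f := LOTZ) (hn := hn) (select := select)
          (select {x}).support {Q | (n - mld Q) + 1 ≤ n - mld {x}} 1 (le_of_eq hmeas.symm)
          (by
            intro s hs
            have hsx : s = x := Finset.mem_singleton.mp
              (hsel {x} (Finset.singleton_nonempty x) s hs)
            subst hsx
            refine ⟨i, ?_⟩
            rw [hup]
            have h1 := mld_singleton s
            have h2 := mld_singleton (flipBit s i)
            have h3 := ldom_le_n (flipBit s i)
            have h4 : leadingOnes s + trailingZeros s < n := by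
              have := ldom_le_n s
              rcases Nat.lt_or_ge (leadingOnes s + trailingZeros s) n with h | h
              · exact h
              · exact absurd (pareto_iff.mpr (by omega)) hx
            show (n - mld ({flipBit s i} : Finset (BitString n))) + 1 ≤
              n - mld ({s} : Finset (BitString n))
            omega)
        rwa [one_mul] at this)
    -- n⁻¹ * E ≤ n  ⟹  E ≤ n * n
    have hE : expectedRuntime (initDist n) st (fun P => ∃ x ∈ P, paretoOptimal LOTZ x) ≤
        (n : ℝ≥0∞) * n := by
      have := mul_le_mul_right hrb (n : ℝ≥0∞)
      rwa [← mul_assoc, ENNReal.mul_inv_cancel hnne hntop, one_mul] at this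
    refine le_trans hE ?_
    rw [hofr, show ((n:ℝ≥0∞) * n) = ((n * n : ℕ) : ℝ≥0∞) by push_cast; ring]
    exact_mod_cast Nat.cast_le.mpr
      (by rw [pow_two]; exact Nat.le_mul_of_pos_left _ (by norm_num))
  · -- Claim 2: cover the whole front
    intro p hp0 hp1 hpg
    have hptop : p ≠ ⊤ := ne_top_of_le_ne_top ENNReal.one_ne_top hp1
    have hrb := runtime_bound (initDist n) st (coversFront LOTZ)
      SInv (fun P => (n - mld P) + (n + 1 - cov n P)) (2 * n + 1) (p * (n : ℝ≥0∞)⁻¹)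
      hinit hinv
      (fun P _ => by
        show (n - mld P) + (n + 1 - cov n P) ≤ 2 * n + 1
        have h1 := Nat.sub_le n (mld P); have h2 := Nat.sub_le (n+1) (cov n P); omega)
      (by
        intro P _ Q hQ
        obtain ⟨s, _, i, rfl⟩ := support_step hQ
        have h1 := mld_updatePop P (flipBit s i)
        have h2 := cov_updatePop P (flipBit s i)
        show (n - mld (updatePop LOTZ P (flipBit s i))) + (n + 1 - cov n (updatePop LOTZ P (flipBit s i))) ≤
          (n - mld P) + (n + 1 - cov n P)
        omega)
      (by
        intro P hI hng
        have hcovP : cov n P ≤ n := by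
          have h1 := cov_le P
          have h2 : cov n P ≠ n + 1 := fun h => hng (coversFront_iff.mpr h)
          omega
        by_cases hpar : ∃ x ∈ P, paretoOptimal LOTZ x
        · -- a good individual is selected with probability ≥ p
          have hgood := hpg P hI.1 hI.2.1 hpar hng
          apply step_prob (f := LOTZ) (hn := hn) (select := select)
            {x | isGood LOTZ P x} _ p hgood
          intro s hs
          obtain ⟨-, y, ⟨i, rfl⟩, hpy, hunatt⟩ := hs
          refine ⟨i, ?_⟩
          set y := flipBit s i with hy
          have hnd : ¬ ∃ z ∈ P, dominates LOTZ z y := fun ⟨z, _, hdz⟩ => hpy ⟨z, hdz⟩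
          have hyQ : y ∈ updatePop LOTZ P y := mem_updatePop_self hnd
          set j := leadingOnes y with hj
          have hjle : j ≤ n := leadingOnes_le_n y
          have hyopt : y = opt n j := pareto_eq_opt hpy
          have hnotP : opt n j ∉ P := by
            intro hmem
            exact hunatt (opt n j) hmem (by rw [hyopt])
          have hcovQ : cov n P + 1 ≤ cov n (updatePop LOTZ P y) := by
            have hins : insert j ((Finset.range (n+1)).filter fun i => opt n i ∈ P) ⊆
                ((Finset.range (n+1)).filter fun i => opt n i ∈ updatePop LOTZ P y) := by
              apply Finset.insert_subset
              · rw [Finset.mem_filter, Finset.mem_range]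
                exact ⟨by omega, by rw [← hyopt]; exact hyQ⟩
              · intro k hk
                rw [Finset.mem_filter, Finset.mem_range] at hk ⊢
                exact ⟨hk.1, opt_mem_updatePop (by omega) y hk.2⟩
            have hjni : j ∉ ((Finset.range (n+1)).filter fun i => opt n i ∈ P) := by
              rw [Finset.mem_filter]
              exact fun h => hnotP h.2
            calc cov n P + 1
                = (insert j ((Finset.range (n+1)).filter fun i => opt n i ∈ P)).card :=
                  (Finset.card_insert_of_notMem hjni).symm
              _ ≤ _ := Finset.card_le_card hins
          have hmld := mld_updatePop P y
          have hcovQle := cov_le (updatePop LOTZ P y)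
          show (n - mld (updatePop LOTZ P y)) + (n + 1 - cov n (updatePop LOTZ P y)) + 1 ≤
            (n - mld P) + (n + 1 - cov n P)
          omega
        · -- singleton phase: make progress in the L-dominant attribute
          rcases hI.2.2.resolve_left hpar with ⟨x, rfl⟩
          have hx : ¬ paretoOptimal LOTZ x := not_pareto_of_singleton hpar
          obtain ⟨i, hup, hinc⟩ := improve_singleton hx
          have hmeas := support_measure_one (select {x})
          have hstep := step_prob (f := LOTZ) (hn := hn) (select := select)
            (select {x}).support
            {Q | (n - mld Q) + (n + 1 - cov n Q) + 1 ≤ (n - mld {x}) + (n + 1 - cov n {x})}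
            1 (le_of_eq hmeas.symm)
            (by
              intro s hs
              have hsx : s = x := Finset.mem_singleton.mp
                (hsel {x} (Finset.singleton_nonempty x) s hs)
              subst hsx
              refine ⟨i, ?_⟩
              have hcovm := cov_updatePop ({s} : Finset (BitString n)) (flipBit s i)
              rw [hup] at hcovm ⊢
              have h1 := mld_singleton s
              have h2 := mld_singleton (flipBit s i)
              have h3 := ldom_le_n (flipBit s i)
              have h4 : leadingOnes s + trailingZeros s < n := by
                have := ldom_le_n s
                rcases Nat.lt_or_ge (leadingOnes s + trailingZeros s) n with h | h
                · exact h
                · exact absurd (pareto_iff.mpr (by omega)) hx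
              have h5 := cov_le ({flipBit s i} : Finset (BitString n))
              show (n - mld ({flipBit s i} : Finset (BitString n))) +
                  (n + 1 - cov n ({flipBit s i} : Finset (BitString n))) + 1 ≤
                (n - mld ({s} : Finset (BitString n))) + (n + 1 - cov n ({s} : Finset (BitString n)))
              omega)
          calc p * (n : ℝ≥0∞)⁻¹ ≤ 1 * (n : ℝ≥0∞)⁻¹ := mul_le_mul_left hp1 _
            _ ≤ _ := hstep)
    -- (p/n) * E ≤ 2n+1  ⟹  E ≤ (2n+1)·n / p ≤ 3n²/p
    have hs0 : p * (n : ℝ≥0∞)⁻¹ ≠ 0 :=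
      mul_ne_zero hp0.ne' (ENNReal.inv_ne_zero.mpr hntop)
    have hstop : p * (n : ℝ≥0∞)⁻¹ ≠ ⊤ :=
      ENNReal.mul_ne_top hptop (ENNReal.inv_ne_top.mpr hnne)
    have hE : expectedRuntime (initDist n) st (coversFront LOTZ) ≤
        ((2 * n + 1 : ℕ) : ℝ≥0∞) / (p * (n : ℝ≥0∞)⁻¹) :=
      (ENNReal.le_div_iff_mul_le (Or.inl hs0) (Or.inl hstop)).mpr (by
        rw [mul_comm] at hrb; exact_mod_cast hrb)
    refine le_trans hE ?_
    rw [div_eq_mul_inv, ENNReal.mul_inv (Or.inl hp0.ne') (Or.inl hptop), inv_inv,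
      ← mul_assoc, hofr, ENNReal.div_eq_inv_mul]
    calc ((2 * n + 1 : ℕ) : ℝ≥0∞) * p⁻¹ * (n : ℝ≥0∞)
        = p⁻¹ * (((2 * n + 1 : ℕ) : ℝ≥0∞) * n) := by ring
      _ ≤ p⁻¹ * ((3 * n ^ 2 : ℕ) : ℝ≥0∞) := by
          apply mul_le_mul_right
          rw [show (((2 * n + 1 : ℕ) : ℝ≥0∞) * n) = (((2 * n + 1) * n : ℕ) : ℝ≥0∞) by
            push_cast; ring]
          exact Nat.cast_le.mpr (by rw [pow_two]; nlinarith [hn])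

end EMO
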